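/- Let X be a graph with a finite homological isoperimetric function with parameters R₀ and super-additive function θ₀. Then for every R ≥ R₀: (1) every 1-cycle b ∈ C_1^R(X) ∩ B_1(X) lies in B_1^R(X) = ∂C_2^R(X); (2) every b ∈ B_1^R(X) with integer coefficients satisfies ‖b‖_F^R ≤ θ(R·‖b‖₁) where θ(s) = θ₀(3s) + 5s. -/

import Mathlib

open Finsupp

variable {V : Type*}

/-- 0-chains. -/
abbrev C0 (V : Type*) := V →₀ ℝ
/-- 1-chains: free real vector space on ordered pairs of vertices. -/
abbrev C1 (V : Type*) := (V × V) →₀ ℝ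
/-- 2-chains: free real vector space on ordered triples of vertices. -/
abbrev C2 (V : Type*) := (V × V × V) →₀ ℝ
/-- 3-chains. -/
abbrev C3 (V : Type*) := (V × V × V × V) →₀ ℝ

/-- ℓ¹-norm of a finitely supported chain. -/
noncomputable def l1 {α : Type*} (c : α →₀ ℝ) : ℝ := c.support.sum fun t => |c t|

/-- Boundary map ∂ : C₂ → C₁, (x₀,x₁,x₂) ↦ (x₁,x₂) − (x₀,x₂) + (x₀,x₁). -/
noncomputable def bdry2 : C2 V →ₗ[ℝ] C1 V :=
  Finsupp.lsum ℝ fun t => LinearMap.toSpanSingleton ℝ (C1 V)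
    (single (t.2.1, t.2.2) 1 - single (t.1, t.2.2) 1 + single (t.1, t.2.1) 1)

/-- Boundary map ∂ : C₁ → C₀, (x₀,x₁) ↦ x₁ − x₀. -/
noncomputable def bdry1 : C1 V →ₗ[ℝ] C0 V :=
  Finsupp.lsum ℝ fun t => LinearMap.toSpanSingleton ℝ (C0 V)
    (single t.2 1 - single t.1 1)

/-- Boundary map ∂ : C₃ → C₂. -/
noncomputable def bdry3 : C3 V →ₗ[ℝ] C2 V :=
  Finsupp.lsum ℝ fun t => LinearMap.toSpanSingleton ℝ (C2 V)
    (single (t.2.1, t.2.2.1, t.2.2.2) 1 - single (t.1, t.2.2.1, t.2.2.2) 1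
      + single (t.1, t.2.1, t.2.2.2) 1 - single (t.1, t.2.1, t.2.2.1) 1)

/-- Two vertices are at (finite) distance at most R. -/
def pairOK (G : SimpleGraph V) (R : ℕ) (a b : V) : Prop :=
  G.Reachable a b ∧ G.dist a b ≤ R

/-- Membership in C₁^R : supported on pairs at distance ≤ R. -/
def memC1R (G : SimpleGraph V) (R : ℕ) (c : C1 V) : Prop :=
  ∀ t ∈ c.support, pairOK G R t.1 t.2

/-- Membership in C₂^R : supported on triples of diameter ≤ R. -/
def memC2R (G : SimpleGraph V) (R : ℕ) (c : C2 V) : Prop :=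
  ∀ t ∈ c.support, pairOK G R t.1 t.2.1 ∧ pairOK G R t.1 t.2.2 ∧ pairOK G R t.2.1 t.2.2

/-- Membership in B₁^R = ∂C₂^R. -/
def memB1R (G : SimpleGraph V) (R : ℕ) (b : C1 V) : Prop :=
  ∃ a : C2 V, memC2R G R a ∧ bdry2 a = b

/-- The filling norm ‖b‖_F^R = inf of ℓ¹-norms of fillings in C₂^R. -/
noncomputable def fillNorm (G : SimpleGraph V) (R : ℕ) (b : C1 V) : ℝ :=
  sInf {r | ∃ a : C2 V, memC2R G R a ∧ bdry2 a = b ∧ r = l1 a}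

/-- The 1-chain c(p) associated to a walk p. -/
noncomputable def walkChain (G : SimpleGraph V) {x y : V} (p : G.Walk x y) : C1 V :=
  (p.darts.map fun d => single d.toProd (1 : ℝ)).sum

/-- A walk is geodesic if its length realizes the distance of its endpoints. -/
def IsGeodesicWalk (G : SimpleGraph V) {x y : V} (p : G.Walk x y) : Prop :=
  p.length = G.dist x y

/-- Geodesic triangles of G are n-slim. -/
def SlimTriangles (G : SimpleGraph V) (n : ℕ) : Prop :=
  ∀ (x y z : V) (p : G.Walk x y) (q : G.Walk y z) (r : G.Walk x z),
    IsGeodesicWalk G p → IsGeodesicWalk G q → IsGeodesicWalk G r →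
    (∀ v ∈ p.support, ∃ w, (w ∈ q.support ∨ w ∈ r.support) ∧ G.dist v w ≤ n) ∧
    (∀ v ∈ q.support, ∃ w, (w ∈ p.support ∨ w ∈ r.support) ∧ G.dist v w ≤ n) ∧
    (∀ v ∈ r.support, ∃ w, (w ∈ p.support ∨ w ∈ q.support) ∧ G.dist v w ≤ n)

/-- A real chain has integer coefficients. -/
def IntCoeffs {α : Type*} (c : α →₀ ℝ) : Prop := ∀ t, ∃ n : ℤ, c t = n

/-- X has a finite homological isoperimetric function with parameters R₀, θ :
for every closed path p, c(p) ∈ B₁^{R₀} and ‖c(p)‖_F^{R₀} ≤ θ(length p). -/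
def FinHomIsop (G : SimpleGraph V) (R₀ : ℕ) (θ : ℕ → ℝ) : Prop :=
  ∀ (x : V) (p : G.Walk x x), memB1R G R₀ (walkChain G p) ∧
    fillNorm G R₀ (walkChain G p) ≤ θ p.length

/-- A 2-cochain is bounded on each C₂^R. -/
def Bdd2 {W : Type*} [NormedAddCommGroup W] [NormedSpace ℝ W]
    (G : SimpleGraph V) (f : C2 V →ₗ[ℝ] W) : Prop :=
  ∀ R : ℕ, ∃ M : ℝ, ∀ c : C2 V, memC2R G R c → ‖f c‖ ≤ M * l1 c

/-- A 1-cochain is bounded on each C₁^R. -/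
def Bdd1 {W : Type*} [NormedAddCommGroup W] [NormedSpace ℝ W]
    (G : SimpleGraph V) (f : C1 V →ₗ[ℝ] W) : Prop :=
  ∀ R : ℕ, ∃ M : ℝ, ∀ c : C1 V, memC1R G R c → ‖f c‖ ≤ M * l1 c

/-- A Banach space is 1-injective: bounded linear maps into it extend from
subspaces of normed spaces with the same norm. -/
def IsOneInjective (W : Type*) [NormedAddCommGroup W] [NormedSpace ℝ W] : Prop :=
  ∀ (E : Type) [NormedAddCommGroup E] [NormedSpace ℝ E],
    ∀ (p : Subspace ℝ E) (φ : p →L[ℝ] W),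
      ∃ ψ : E →L[ℝ] W, (∀ x : p, ψ x = φ x) ∧ ‖ψ‖ ≤ ‖φ‖


section Aux
variable {α : Type*}

lemma l1_nonneg {α : Type*} (c : α →₀ ℝ) : 0 ≤ l1 c :=
  Finset.sum_nonneg fun _ _ => abs_nonneg _

lemma l1_eq_sum {α : Type*} (c : α →₀ ℝ) (s : Finset α) (hs : c.support ⊆ s) :
    l1 c = s.sum fun t => |c t| := by
  refine Finset.sum_subset hs fun x _ hx => ?_
  simp [Finsupp.notMem_support_iff.mp hx]

lemma l1_zero {α : Type*} : l1 (0 : α →₀ ℝ) = 0 := by simp [l1]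

lemma l1_add_le {α : Type*} (a b : α →₀ ℝ) : l1 (a + b) ≤ l1 a + l1 b := by
  classical
  rw [l1_eq_sum (a+b) (a.support ∪ b.support) Finsupp.support_add,
    l1_eq_sum a (a.support ∪ b.support) Finset.subset_union_left,
    l1_eq_sum b (a.support ∪ b.support) Finset.subset_union_right, ← Finset.sum_add_distrib]
  exact Finset.sum_le_sum fun i _ => by simpa using abs_add_le (a i) (b i)

lemma l1_smul_le {α : Type*} (r : ℝ) (a : α →₀ ℝ) : l1 (r • a) ≤ |r| * l1 a := by
  classical
  rw [l1_eq_sum (r • a) a.support Finsupp.support_smul, l1, Finset.mul_sum]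
  refine Finset.sum_le_sum fun i _ => ?_
  simp [Finsupp.smul_apply, abs_mul]

lemma l1_smul_nonneg {α : Type*} (r : ℝ) (hr : 0 ≤ r) (a : α →₀ ℝ) : l1 (r • a) = r * l1 a := by
  classical
  rcases eq_or_lt_of_le hr with h | h
  · simp [← h, l1_zero]
  have hsupp : (r • a).support = a.support := by
    ext t; simp [Finsupp.smul_apply, h.ne']
  conv_rhs => rw [l1]
  rw [l1, hsupp, Finset.mul_sum]
  refine Finset.sum_congr rfl fun i _ => ?_
  simp [Finsupp.smul_apply, abs_mul, abs_of_pos h]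

lemma l1_single_le {α : Type*} (t : α) (r : ℝ) : l1 (Finsupp.single t r) ≤ |r| := by
  classical
  rw [l1_eq_sum _ {t} Finsupp.support_single_subset]
  simp [Finsupp.single_apply]

lemma l1_single_one {α : Type*} (t : α) : l1 (Finsupp.single t (1:ℝ)) = 1 := by
  classical
  rw [l1_eq_sum _ {t} Finsupp.support_single_subset]
  simp [Finsupp.single_apply]

lemma l1_add_of_nonneg {α : Type*} (a b : α →₀ ℝ) (ha : ∀ t, 0 ≤ a t) (hb : ∀ t, 0 ≤ b t) :
    l1 (a + b) = l1 a + l1 b := by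
  classical
  rw [l1_eq_sum (a+b) (a.support ∪ b.support) Finsupp.support_add,
    l1_eq_sum a (a.support ∪ b.support) Finset.subset_union_left,
    l1_eq_sum b (a.support ∪ b.support) Finset.subset_union_right, ← Finset.sum_add_distrib]
  refine Finset.sum_congr rfl fun i _ => ?_
  rw [Finsupp.add_apply, abs_of_nonneg (ha i), abs_of_nonneg (hb i),
    abs_of_nonneg (add_nonneg (ha i) (hb i))]

lemma l1_eq_zero {α : Type*} {c : α →₀ ℝ} (h : l1 c = 0) : c = 0 := by
  classical
  ext t
  by_cases ht : t ∈ c.support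
  · have := (Finset.sum_eq_zero_iff_of_nonneg (fun i _ => abs_nonneg (c i))).mp h t ht
    simpa using this
  · simpa using Finsupp.notMem_support_iff.mp ht

lemma bdry2_single (t : V × V × V) (r : ℝ) :
    bdry2 (single t r) =
      r • (single (t.2.1, t.2.2) (1:ℝ) - single (t.1, t.2.2) 1 + single (t.1, t.2.1) 1) := by
  simp [bdry2]

lemma bdry1_single (t : V × V) (r : ℝ) :
    bdry1 (single t r) = r • (single t.2 (1:ℝ) - single t.1 1) := by
  simp [bdry1]

lemma bdry1_bdry2 (c : C2 V) : bdry1 (bdry2 c) = 0 := by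
  suffices h : (bdry1.comp bdry2 : C2 V →ₗ[ℝ] C0 V) = 0 by
    have := congrArg (fun f => f c) (congrArg DFunLike.coe h)
    simpa using this
  apply Finsupp.lhom_ext
  intro t r
  simp only [LinearMap.comp_apply, bdry2_single, map_smul, map_add, map_sub, bdry1_single,
    LinearMap.zero_apply, one_smul]
  rw [smul_eq_zero]
  right
  abel

lemma bdry1_apply_eq_sum (c : C1 V) (v : V) :
    bdry1 c v = ∑ t ∈ c.support, c t * ((single t.2 (1:ℝ) - single t.1 1 : C0 V) v) := by
  rw [bdry1, Finsupp.lsum_apply, Finsupp.sum_apply, Finsupp.sum]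
  refine Finset.sum_congr rfl fun t _ => ?_
  simp [LinearMap.toSpanSingleton_apply]

/-- sum of unit singles over a list -/
noncomputable def lsing (l : List α) : α →₀ ℝ := (l.map fun a => single a (1:ℝ)).sum

@[simp] lemma lsing_nil : lsing ([] : List α) = 0 := rfl
@[simp] lemma lsing_cons (a : α) (l : List α) : lsing (a :: l) = single a 1 + lsing l := by
  simp [lsing]

lemma lsing_nonneg (l : List α) (b : α) : 0 ≤ lsing l b := by
  classical
  induction l with
  | nil => simp
  | cons a l ih =>
    simp only [lsing_cons, Finsupp.add_apply]
    have : (0:ℝ) ≤ (single a (1:ℝ)) b := by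
      rw [Finsupp.single_apply]; split <;> norm_num
    linarith

lemma l1_lsing (l : List α) : l1 (lsing l) = l.length := by
  classical
  induction l with
  | nil => simp [l1_zero]
  | cons a l ih =>
    rw [lsing_cons, l1_add_of_nonneg _ _ (fun t => by
      rw [Finsupp.single_apply]; split <;> norm_num) (lsing_nonneg l), l1_single_one, ih]
    simp [add_comm]

lemma lsing_apply_of_not_mem {l : List α} {b : α} (h : b ∉ l) : lsing l b = 0 := by
  classical
  induction l with
  | nil => simp
  | cons a l ih =>
    simp only [lsing_cons, Finsupp.add_apply]
    rw [ih (fun hb => h (List.mem_cons_of_mem _ hb)), Finsupp.single_apply]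
    have : a ≠ b := fun hab => h (hab ▸ (List.mem_cons_self : a ∈ a :: l))
    simp [this]

lemma lsing_apply_nodup [DecidableEq α] {l : List α} (hl : l.Nodup) (b : α) :
    lsing l b = if b ∈ l then 1 else 0 := by
  classical
  induction l with
  | nil => simp
  | cons a l ih =>
    simp only [lsing_cons, Finsupp.add_apply, List.mem_cons]
    rw [ih (List.Nodup.of_cons hl), Finsupp.single_apply]
    rcases List.nodup_cons.mp hl with ⟨hal, _⟩
    by_cases hb : b = a
    · subst hb
      simp [lsing_apply_of_not_mem hal, hal]
    · simp [Ne.symm hb, hb]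

lemma lsing_int (l : List α) (b : α) : ∃ n : ℤ, lsing l b = n := by
  classical
  induction l with
  | nil => exact ⟨0, by simp⟩
  | cons a l ih =>
    obtain ⟨n, hn⟩ := ih
    simp only [lsing_cons, Finsupp.add_apply]
    rw [Finsupp.single_apply]
    by_cases hb : a = b
    · exact ⟨1 + n, by simp [hb, hn]⟩
    · exact ⟨n, by simp [hb, hn]⟩

lemma walkChain_eq_lsing (G : SimpleGraph V) {x y : V} (p : G.Walk x y) :
    walkChain G p = lsing (p.darts.map SimpleGraph.Dart.toProd) := by
  simp [walkChain, lsing, List.map_map, Function.comp_def]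

@[simp] lemma walkChain_nil (G : SimpleGraph V) (x : V) :
    walkChain G (SimpleGraph.Walk.nil : G.Walk x x) = 0 := rfl

lemma walkChain_cons (G : SimpleGraph V) {x u y : V} (h : G.Adj x u) (p : G.Walk u y) :
    walkChain G (SimpleGraph.Walk.cons h p) = single (x, u) 1 + walkChain G p := by
  simp [walkChain_eq_lsing, SimpleGraph.Walk.darts_cons]

lemma bdry1_walkChain (G : SimpleGraph V) {x y : V} (p : G.Walk x y) :
    bdry1 (walkChain G p) = single y 1 - single x 1 := by
  induction p with
  | nil => simp
  | cons h p ih =>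
    rw [walkChain_cons, map_add, ih, bdry1_single]
    simp only [one_smul]
    abel


/-! ### pairOK and memC2R lemmas -/

lemma pairOK_self (G : SimpleGraph V) (R : ℕ) (x : V) : pairOK G R x x :=
  ⟨SimpleGraph.Reachable.refl x, by simp [SimpleGraph.dist_self]⟩

lemma pairOK.symm {G : SimpleGraph V} {R : ℕ} {x y : V} (h : pairOK G R x y) : pairOK G R y x :=
  ⟨h.1.symm, by rw [SimpleGraph.dist_comm]; exact h.2⟩

lemma pairOK_of_adj {G : SimpleGraph V} {R : ℕ} (hR : 1 ≤ R) {x y : V} (h : G.Adj x y) :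
    pairOK G R x y :=
  ⟨h.reachable, le_trans (by simpa using G.dist_le (h.toWalk)) hR⟩

lemma pairOK_mono {G : SimpleGraph V} {R R' : ℕ} (hRR' : R ≤ R') {x y : V}
    (h : pairOK G R x y) : pairOK G R' x y := ⟨h.1, le_trans h.2 hRR'⟩

lemma memC2R_zero (G : SimpleGraph V) (R : ℕ) : memC2R G R (0 : C2 V) := by
  intro t ht; simp at ht

lemma memC2R_add {G : SimpleGraph V} {R : ℕ} {a b : C2 V} (ha : memC2R G R a)
    (hb : memC2R G R b) : memC2R G R (a + b) := by
  classical
  intro t ht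
  have := Finsupp.support_add ht
  rcases Finset.mem_union.mp this with h | h
  · exact ha t h
  · exact hb t h

lemma memC2R_smul {G : SimpleGraph V} {R : ℕ} (r : ℝ) {a : C2 V} (ha : memC2R G R a) :
    memC2R G R (r • a) := by
  intro t ht
  exact ha t (Finsupp.support_smul ht)

lemma memC2R_neg {G : SimpleGraph V} {R : ℕ} {a : C2 V} (ha : memC2R G R a) :
    memC2R G R (-a) := by
  have := memC2R_smul (-1 : ℝ) ha
  simpa using this

lemma memC2R_sub {G : SimpleGraph V} {R : ℕ} {a b : C2 V} (ha : memC2R G R a)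
    (hb : memC2R G R b) : memC2R G R (a - b) := by
  rw [sub_eq_add_neg]; exact memC2R_add ha (memC2R_neg hb)

lemma memC2R_single {G : SimpleGraph V} {R : ℕ} {t : V × V × V} (r : ℝ)
    (h1 : pairOK G R t.1 t.2.1) (h2 : pairOK G R t.1 t.2.2) (h3 : pairOK G R t.2.1 t.2.2) :
    memC2R G R (Finsupp.single t r) := by
  intro s hs
  have := Finsupp.support_single_subset hs
  simp only [Finset.mem_singleton] at this
  subst this
  exact ⟨h1, h2, h3⟩

lemma memC2R_mono {G : SimpleGraph V} {R R' : ℕ} (hRR' : R ≤ R') {a : C2 V}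
    (ha : memC2R G R a) : memC2R G R' a := fun t ht =>
  ⟨pairOK_mono hRR' (ha t ht).1, pairOK_mono hRR' (ha t ht).2.1,
    pairOK_mono hRR' (ha t ht).2.2⟩

lemma memB1R_mono {G : SimpleGraph V} {R R' : ℕ} (hRR' : R ≤ R') {b : C1 V}
    (hb : memB1R G R b) : memB1R G R' b := by
  obtain ⟨a, ha, hab⟩ := hb
  exact ⟨a, memC2R_mono hRR' ha, hab⟩

/-! ### Fillable -/

/-- `b` bounds a 2-chain in `C₂^R` of `l1`-norm at most `cost`. -/
def Fillable (G : SimpleGraph V) (R : ℕ) (cost : ℝ) (b : C1 V) : Prop :=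
  ∃ a : C2 V, memC2R G R a ∧ bdry2 a = b ∧ l1 a ≤ cost

lemma Fillable.memB1R {G : SimpleGraph V} {R : ℕ} {c : ℝ} {b : C1 V}
    (h : Fillable G R c b) : memB1R G R b := by
  obtain ⟨a, h1, h2, _⟩ := h; exact ⟨a, h1, h2⟩

lemma Fillable.zero (G : SimpleGraph V) (R : ℕ) : Fillable G R 0 (0 : C1 V) :=
  ⟨0, memC2R_zero G R, by simp, by simp [l1_zero]⟩

lemma Fillable.add {G : SimpleGraph V} {R : ℕ} {c₁ c₂ : ℝ} {b₁ b₂ : C1 V}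
    (h₁ : Fillable G R c₁ b₁) (h₂ : Fillable G R c₂ b₂) :
    Fillable G R (c₁ + c₂) (b₁ + b₂) := by
  obtain ⟨a₁, m₁, e₁, l₁'⟩ := h₁
  obtain ⟨a₂, m₂, e₂, l₂'⟩ := h₂
  exact ⟨a₁ + a₂, memC2R_add m₁ m₂, by rw [map_add, e₁, e₂],
    le_trans (l1_add_le a₁ a₂) (by linarith)⟩

lemma Fillable.smul {G : SimpleGraph V} {R : ℕ} {c : ℝ} {b : C1 V} (r : ℝ)
    (h : Fillable G R c b) : Fillable G R (|r| * c) (r • b) := by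
  obtain ⟨a, m, e, l⟩ := h
  refine ⟨r • a, memC2R_smul r m, by rw [map_smul, e], ?_⟩
  refine le_trans (l1_smul_le r a) ?_
  exact mul_le_mul_of_nonneg_left l (abs_nonneg r)

lemma Fillable.neg {G : SimpleGraph V} {R : ℕ} {c : ℝ} {b : C1 V}
    (h : Fillable G R c b) : Fillable G R c (-b) := by
  have := h.smul (-1)
  simpa using this

lemma Fillable.mono {G : SimpleGraph V} {R : ℕ} {c c' : ℝ} {b : C1 V} (hcc' : c ≤ c')
    (h : Fillable G R c b) : Fillable G R c' b := by
  obtain ⟨a, m, e, l⟩ := h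
  exact ⟨a, m, e, le_trans l hcc'⟩

lemma Fillable.sub {G : SimpleGraph V} {R : ℕ} {c₁ c₂ : ℝ} {b₁ b₂ : C1 V}
    (h₁ : Fillable G R c₁ b₁) (h₂ : Fillable G R c₂ b₂) :
    Fillable G R (c₁ + c₂) (b₁ - b₂) := by
  rw [sub_eq_add_neg]; exact h₁.add h₂.neg

/-! ### Telescope chains and basic fillings -/

/-- The cone with apex `z` over a walk. -/
noncomputable def teleChain (G : SimpleGraph V) (z : V) {x y : V} (p : G.Walk x y) : C2 V :=
  lsing (p.darts.map fun d => (z, d.toProd.1, d.toProd.2))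

lemma bdry2_teleChain (G : SimpleGraph V) (z : V) {x y : V} (p : G.Walk x y) :
    bdry2 (teleChain G z p)
      = walkChain G p - Finsupp.single (z, y) 1 + Finsupp.single (z, x) 1 := by
  induction p with
  | nil => simp [teleChain]
  | cons h p ih =>
    rw [teleChain, SimpleGraph.Walk.darts_cons, List.map_cons, lsing_cons, map_add,
      bdry2_single, ← teleChain, ih, walkChain_cons]
    simp only [one_smul]
    abel

lemma l1_teleChain (G : SimpleGraph V) (z : V) {x y : V} (p : G.Walk x y) :
    l1 (teleChain G z p) = p.length := by
  rw [teleChain, l1_lsing]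
  simp

lemma memC2R_lsing {G : SimpleGraph V} {R : ℕ} {L : List (V × V × V)}
    (h : ∀ t ∈ L, pairOK G R t.1 t.2.1 ∧ pairOK G R t.1 t.2.2 ∧ pairOK G R t.2.1 t.2.2) :
    memC2R G R (lsing L) := by
  induction L with
  | nil => simpa using memC2R_zero G R
  | cons a L ih =>
    rw [lsing_cons]
    obtain ⟨h1, h2, h3⟩ := h a (List.mem_cons_self : a ∈ a :: L)
    exact memC2R_add (memC2R_single 1 h1 h2 h3)
      (ih fun t ht => h t (List.mem_cons_of_mem _ ht))

lemma pairOK_of_mem_support {G : SimpleGraph V} {R : ℕ} {x y v : V} {p : G.Walk x y}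
    (hv : v ∈ p.support) (hlen : p.length ≤ R) : pairOK G R x v := by
  classical
  refine ⟨⟨p.takeUntil v hv⟩, ?_⟩
  exact le_trans (G.dist_le (p.takeUntil v hv))
    (le_trans (p.length_takeUntil_le hv) hlen)

lemma memC2R_teleChain {G : SimpleGraph V} {R : ℕ} (hR : 1 ≤ R) {x y : V} (p : G.Walk x y)
    (hlen : p.length ≤ R) : memC2R G R (teleChain G x p) := by
  refine memC2R_lsing ?_
  intro t ht
  simp only [List.mem_map] at ht
  obtain ⟨d, hd, rfl⟩ := ht
  refine ⟨pairOK_of_mem_support (p.dart_fst_mem_support_of_mem_darts hd) hlen,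
    pairOK_of_mem_support (p.dart_snd_mem_support_of_mem_darts hd) hlen,
    pairOK_of_adj hR d.adj⟩


/-! ### More l1 and walkChain lemmas -/

lemma l1_neg {α : Type*} (a : α →₀ ℝ) : l1 (-a) = l1 a := by
  have h1 := l1_smul_le (-1 : ℝ) a
  have h2 := l1_smul_le (-1 : ℝ) ((-1 : ℝ) • a)
  simp only [abs_neg, abs_one, one_mul, neg_smul, one_smul, neg_neg] at h1 h2
  linarith

lemma l1_sub_le {α : Type*} (a b : α →₀ ℝ) : l1 (a - b) ≤ l1 a + l1 b := by
  rw [sub_eq_add_neg]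
  exact le_trans (l1_add_le a (-b)) (by rw [l1_neg])

lemma l1_single_add {α : Type*} {t : α} {r : ℝ} {f : α →₀ ℝ} (ht : t ∉ f.support) :
    l1 (Finsupp.single t r + f) = |r| + l1 f := by
  classical
  have hft : f t = 0 := Finsupp.notMem_support_iff.mp ht
  have hsub : (Finsupp.single t r + f).support ⊆ insert t f.support := by
    refine le_trans Finsupp.support_add ?_
    refine Finset.union_subset (le_trans Finsupp.support_single_subset ?_) ?_
    · simp
    · exact Finset.subset_insert _ _
  rw [l1_eq_sum _ _ hsub, Finset.sum_insert ht,
    l1_eq_sum f f.support le_rfl]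
  have h1 : (Finsupp.single t r + f) t = r := by
    simp [Finsupp.single_apply, hft]
  rw [h1]
  congr 1
  refine Finset.sum_congr rfl fun s hs => ?_
  have hst : t ≠ s := fun h => ht (h ▸ hs)
  simp [Finsupp.single_apply, hst]

lemma walkChain_nonneg (G : SimpleGraph V) {x y : V} (p : G.Walk x y) (e : V × V) :
    0 ≤ walkChain G p e := by
  rw [walkChain_eq_lsing]; exact lsing_nonneg _ e

lemma l1_walkChain (G : SimpleGraph V) {x y : V} (p : G.Walk x y) :
    l1 (walkChain G p) = p.length := by
  rw [walkChain_eq_lsing, l1_lsing]; simp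

lemma adjSupp_walkChain (G : SimpleGraph V) {x y : V} (p : G.Walk x y) :
    ∀ e ∈ (walkChain G p).support, G.Adj e.1 e.2 := by
  intro e he
  rw [walkChain_eq_lsing] at he
  have : e ∈ p.darts.map SimpleGraph.Dart.toProd := by
    by_contra hmem
    exact (Finsupp.mem_support_iff.mp he) (lsing_apply_of_not_mem hmem)
  obtain ⟨d, _, rfl⟩ := List.mem_map.mp this
  exact d.adj

lemma intCoeffs_walkChain (G : SimpleGraph V) {x y : V} (p : G.Walk x y) :
    IntCoeffs (walkChain G p) := by
  intro e
  rw [walkChain_eq_lsing]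
  exact lsing_int _ e

lemma IntCoeffs.add {α : Type*} {a b : α →₀ ℝ} (ha : IntCoeffs a) (hb : IntCoeffs b) :
    IntCoeffs (a + b) := by
  intro t
  obtain ⟨n, hn⟩ := ha t
  obtain ⟨m, hm⟩ := hb t
  exact ⟨n + m, by simp [hn, hm]⟩

lemma IntCoeffs.smul {α : Type*} {a : α →₀ ℝ} (ha : IntCoeffs a) {r : ℝ} (hr : ∃ n : ℤ, r = n) :
    IntCoeffs (r • a) := by
  intro t
  obtain ⟨n, hn⟩ := ha t
  obtain ⟨m, hm⟩ := hr
  exact ⟨m * n, by simp [Finsupp.smul_apply, hn, hm]⟩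

/-! ### Basic fillings -/

lemma geodFill {G : SimpleGraph V} {R : ℕ} (hR : 1 ≤ R) {x y : V} (h : pairOK G R x y) :
    ∃ γ : G.Walk x y, γ.length ≤ R ∧
      Fillable G R ((γ.length : ℝ) + 1) (Finsupp.single (x, y) 1 - walkChain G γ) := by
  obtain ⟨γ, hγ⟩ := h.1.exists_walk_length_eq_dist
  have hlen : γ.length ≤ R := hγ ▸ h.2
  refine ⟨γ, hlen, Finsupp.single (x, x, x) 1 - teleChain G x γ, ?_, ?_, ?_⟩
  · exact memC2R_sub (memC2R_single 1 (pairOK_self G R x) (pairOK_self G R x)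
      (pairOK_self G R x)) (memC2R_teleChain hR γ hlen)
  · rw [map_sub, bdry2_teleChain, bdry2_single]
    simp only [one_smul]
    abel
  · refine le_trans (l1_sub_le _ _) ?_
    rw [l1_teleChain]
    have := l1_single_le (α := V × V × V) (x, x, x) (1:ℝ)
    simp only [abs_one] at this
    linarith

lemma flipFill {G : SimpleGraph V} {R : ℕ} {x y : V} (h : pairOK G R x y) :
    Fillable G R 2 (Finsupp.single (x, y) 1 + Finsupp.single (y, x) 1) := by
  refine ⟨Finsupp.single (x, y, x) 1 + Finsupp.single (x, x, x) 1, ?_, ?_, ?_⟩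
  · exact memC2R_add (memC2R_single 1 h (pairOK_self G R x) h.symm)
      (memC2R_single 1 (pairOK_self G R x) (pairOK_self G R x) (pairOK_self G R x))
  · rw [map_add, bdry2_single, bdry2_single]
    simp only [one_smul]
    abel
  · refine le_trans (l1_add_le _ _) ?_
    have h1 := l1_single_le (α := V × V × V) (x, y, x) (1:ℝ)
    have h2 := l1_single_le (α := V × V × V) (x, x, x) (1:ℝ)
    simp only [abs_one] at h1 h2
    linarith

lemma pairFill {G : SimpleGraph V} {R : ℕ} (hR : 1 ≤ R) {x y : V} (h : pairOK G R x y) :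
    ∃ γ : G.Walk y x, γ.length ≤ R ∧
      Fillable G R ((R : ℝ) + 3) (Finsupp.single (x, y) 1 + walkChain G γ) := by
  obtain ⟨γ, hlen, hfill⟩ := geodFill hR h.symm
  refine ⟨γ, hlen, ?_⟩
  have h2 := (flipFill h).sub hfill
  have heq : Finsupp.single (x, y) (1:ℝ) + Finsupp.single (y, x) 1 -
      (Finsupp.single (y, x) 1 - walkChain G γ) =
      Finsupp.single (x, y) 1 + walkChain G γ := by abel
  rw [heq] at h2
  refine h2.mono ?_
  have : (γ.length : ℝ) ≤ R := by exact_mod_cast hlen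
  linarith

lemma singleFill {G : SimpleGraph V} {R : ℕ} (hR : 1 ≤ R) {t : V × V}
    (h : pairOK G R t.1 t.2) (r : ℝ) :
    ∃ (z₁ z₂ : V) (γ : G.Walk z₁ z₂), γ.length ≤ R ∧
      Fillable G R (((R : ℝ) + 3) * |r|)
        (Finsupp.single t r - |r| • walkChain G γ) := by
  have hRr : (1:ℝ) ≤ (R:ℝ) := by exact_mod_cast hR
  obtain ⟨x, y⟩ := t
  rcases le_or_gt 0 r with hr | hr
  · obtain ⟨γ, hlen, hfill⟩ := geodFill hR h
    refine ⟨x, y, γ, hlen, ?_⟩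
    have h2 := hfill.smul r
    rw [smul_sub, Finsupp.smul_single, smul_eq_mul, mul_one] at h2
    rw [abs_of_nonneg hr]
    refine h2.mono ?_
    have : (γ.length : ℝ) ≤ R := by exact_mod_cast hlen
    rw [abs_of_nonneg hr]
    nlinarith
  · obtain ⟨γ, hlen, hfill⟩ := pairFill hR h
    refine ⟨y, x, γ, hlen, ?_⟩
    have h2 := hfill.smul r
    rw [smul_add, Finsupp.smul_single, smul_eq_mul, mul_one] at h2
    have heq : r • walkChain G γ = -(|r| • walkChain G γ) := by
      rw [abs_of_neg hr]; simp
    rw [heq, ← sub_eq_add_neg] at h2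
    exact h2.mono (by rw [mul_comm])


/-! ### Reduction to nonnegative edge chains -/

lemma reduce {G : SimpleGraph V} {R : ℕ} (hR : 1 ≤ R) :
    ∀ b : C1 V, memC1R G R b →
    ∃ d : C1 V, (∀ e, 0 ≤ d e) ∧ (∀ e ∈ d.support, G.Adj e.1 e.2) ∧
      Fillable G R (((R:ℝ) + 3) * l1 b) (b - d) ∧ l1 d ≤ (R:ℝ) * l1 b ∧
      (IntCoeffs b → IntCoeffs d) := by
  classical
  intro b
  induction b using Finsupp.induction with
  | zero =>
    intro _
    refine ⟨0, fun e => le_rfl, fun e he => by simp at he, ?_, by simp [l1_zero], fun _ t => ⟨0, by simp⟩⟩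
    simpa [l1_zero] using (Fillable.zero G R)
  | single_add t r f ht hr ih =>
    intro hb
    have hval : (Finsupp.single t r + f) t = r := by
      simp [Finsupp.notMem_support_iff.mp ht]
    have htmem : t ∈ (Finsupp.single t r + f).support := by
      rw [Finsupp.mem_support_iff, hval]; exact hr
    have hOK := hb t htmem
    have hf : memC1R G R f := by
      intro s hs
      refine hb s ?_
      have hst : t ≠ s := fun h => ht (h ▸ hs)
      rw [Finsupp.mem_support_iff, Finsupp.add_apply, Finsupp.single_apply, if_neg hst, zero_add]
      exact Finsupp.mem_support_iff.mp hs
    obtain ⟨d', hd'pos, hd'adj, hd'fill, hd'l1, hd'int⟩ := ih hf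
    obtain ⟨z₁, z₂, γ, hlen, hfill⟩ := singleFill hR hOK r
    set w : C1 V := |r| • walkChain G γ with hw
    have hwpos : ∀ e, 0 ≤ w e := fun e =>
      mul_nonneg (abs_nonneg r) (walkChain_nonneg G γ e)
    have hl1w : l1 w = |r| * γ.length := by
      rw [hw, l1_smul_nonneg _ (abs_nonneg r), l1_walkChain]
    have hl1b : l1 (Finsupp.single t r + f) = |r| + l1 f := l1_single_add ht
    have hlenR : (γ.length : ℝ) ≤ (R : ℝ) := by exact_mod_cast hlen
    refine ⟨w + d', ?_, ?_, ?_, ?_, ?_⟩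
    · intro e
      rw [Finsupp.add_apply]
      exact add_nonneg (hwpos e) (hd'pos e)
    · intro e he
      rcases Finset.mem_union.mp (Finsupp.support_add he) with h | h
      · exact adjSupp_walkChain G γ e (Finsupp.support_smul h)
      · exact hd'adj e h
    · have heq : (Finsupp.single t r + f) - (w + d') = (Finsupp.single t r - w) + (f - d') := by
        abel
      rw [heq]
      refine (hfill.add hd'fill).mono ?_
      rw [hl1b]
      have h0 : (0:ℝ) ≤ |r| := abs_nonneg r
      have h1 : (0:ℝ) ≤ l1 f := l1_nonneg f
      nlinarith
    · refine le_trans (l1_add_le w d') ?_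
      rw [hl1w, hl1b]
      have h0 : (0:ℝ) ≤ |r| := abs_nonneg r
      nlinarith
    · intro hint
      obtain ⟨n, hn⟩ := hint t
      rw [hval] at hn
      have hfint : IntCoeffs f := by
        intro s
        by_cases hst : s = t
        · exact ⟨0, by simp [hst, Finsupp.notMem_support_iff.mp ht]⟩
        · obtain ⟨m, hm⟩ := hint s
          refine ⟨m, ?_⟩
          rw [Finsupp.add_apply, Finsupp.single_apply, if_neg (fun h => hst h.symm), zero_add] at hm
          exact hm
      refine IntCoeffs.add (IntCoeffs.smul (intCoeffs_walkChain G γ) ⟨|n|, ?_⟩) (hd'int hfint)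
      rw [hn, Int.cast_abs]


/-! ### Extracting a cycle from a nonnegative flow -/

lemma walk_of_seq {G : SimpleGraph V} (f : ℕ → V) (h : ∀ k, G.Adj (f k) (f (k + 1))) :
    ∀ (m i : ℕ), ∃ w : G.Walk (f i) (f (i + m)),
      w.darts.map SimpleGraph.Dart.toProd
        = (List.range m).map fun c => (f (i + c), f (i + c + 1)) := by
  intro m
  induction m with
  | zero => intro i; exact ⟨SimpleGraph.Walk.nil, by simp⟩
  | succ m ih =>
    intro i
    obtain ⟨w', hw'⟩ := ih (i + 1)
    have e : i + 1 + m = i + (m + 1) := by omega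
    refine ⟨(SimpleGraph.Walk.cons (h i) w').copy rfl (congrArg f e), ?_⟩
    rw [SimpleGraph.Walk.darts_copy, SimpleGraph.Walk.darts_cons, List.map_cons, hw',
      List.range_succ_eq_map, List.map_cons, List.map_map]
    congr 1
    refine List.map_congr_left fun c _ => ?_
    simp only [Function.comp_apply]
    have e1 : i + (c + 1) = i + 1 + c := by omega
    rw [show Nat.succ c = c + 1 from rfl, e1]

lemma exists_cycle {G : SimpleGraph V} {d : C1 V} (hd0 : d ≠ 0)
    (hpos : ∀ e, 0 ≤ d e) (hadj : ∀ e ∈ d.support, G.Adj e.1 e.2)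
    (hcyc : bdry1 d = 0) :
    ∃ (x : V) (w : G.Walk x x), 0 < w.length ∧
      (w.darts.map SimpleGraph.Dart.toProd).Nodup ∧
      ∀ e ∈ w.darts.map SimpleGraph.Dart.toProd, e ∈ d.support := by
  classical
  -- step A: every support pair has a successor
  have succ : ∀ p ∈ d.support, ∃ z, ((p.2, z) : V × V) ∈ d.support := by
    intro p hp
    by_contra hno
    push_neg at hno
    set v := p.2 with hv
    have h0 : (bdry1 d) v = 0 := by rw [hcyc]; rfl
    rw [bdry1_apply_eq_sum] at h0
    have hfst : ∀ t ∈ d.support, t.1 ≠ v := by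
      intro t htm hteq
      exact hno t.2 (by rw [← hteq, Prod.mk.eta]; exact htm)
    have hnonneg : ∀ t ∈ d.support,
        0 ≤ d t * ((Finsupp.single t.2 (1:ℝ) - Finsupp.single t.1 1 : C0 V) v) := by
      intro t htm
      refine mul_nonneg (hpos t) ?_
      rw [Finsupp.sub_apply, Finsupp.single_apply, Finsupp.single_apply, if_neg (hfst t htm)]
      split <;> norm_num
    have hple : d p * ((Finsupp.single p.2 (1:ℝ) - Finsupp.single p.1 1 : C0 V) v)
        ≤ ∑ t ∈ d.support, d t * ((Finsupp.single t.2 (1:ℝ) - Finsupp.single t.1 1 : C0 V) v) :=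
      Finset.single_le_sum hnonneg hp
    rw [h0] at hple
    have hpv : (Finsupp.single p.2 (1:ℝ) - Finsupp.single p.1 1 : C0 V) v = 1 := by
      rw [Finsupp.sub_apply, Finsupp.single_apply, Finsupp.single_apply,
        if_neg (hfst p hp), if_pos hv.symm]
      norm_num
    rw [hpv, mul_one] at hple
    have hdp : 0 < d p := lt_of_le_of_ne (hpos p) (Ne.symm (Finsupp.mem_support_iff.mp hp))
    linarith
  -- step B: infinite sequence of support pairs
  obtain ⟨p₀, hp₀⟩ := Finsupp.support_nonempty_iff.mpr hd0
  choose nxt hnxt using succ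
  let seq : ℕ → {p : V × V // p ∈ d.support} := fun n =>
    Nat.rec ⟨p₀, hp₀⟩ (fun _ q => ⟨(q.1.2, nxt q.1 q.2), hnxt q.1 q.2⟩) n
  set f : ℕ → V := fun k => (seq k).1.1 with hf
  have hfpair : ∀ k, (f k, f (k + 1)) ∈ d.support := by
    intro k
    have : (f k, f (k + 1)) = (seq k).1 := by
      show ((seq k).1.1, (seq (k+1)).1.1) = (seq k).1
      have : (seq (k+1)).1.1 = (seq k).1.2 := rfl
      rw [this, Prod.mk.eta]
    rw [this]
    exact (seq k).2
  have hadjf : ∀ k, G.Adj (f k) (f (k + 1)) := fun k => hadj _ (hfpair k)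
  -- step C: pigeonhole
  have : ∃ k l, k ≠ l ∧ seq k = seq l := by
    have : Finite {p : V × V // p ∈ d.support} := by
      exact Finite.of_fintype _
    exact Finite.exists_ne_map_eq_of_infinite seq
  obtain ⟨k, l, hkl, hseq⟩ := this
  have H : ∃ m, 0 < m ∧ ∃ i, f i = f (i + m) := by
    rcases Nat.lt_or_ge k l with h' | h'
    · exact ⟨l - k, by omega, k, by rw [show k + (l - k) = l from by omega, hf]; simp [hseq]⟩
    · have h'' : l < k := by omega
      exact ⟨k - l, by omega, l, by rw [show l + (k - l) = k from by omega, hf]; simp [hseq]⟩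
  -- step D: minimal period
  let m₀ := Nat.find H
  obtain ⟨hm₀pos, i₀, hi₀⟩ := Nat.find_spec H
  have hdist : ∀ a b : ℕ, a < b → b - a < m₀ → f (i₀ + a) ≠ f (i₀ + b) := by
    intro a b hab hba heq
    exact Nat.find_min H hba ⟨by omega, i₀ + a, by rw [show i₀ + a + (b - a) = i₀ + b from by omega]; exact heq⟩
  -- step E: build the walk
  obtain ⟨w, hw⟩ := walk_of_seq f hadjf m₀ i₀
  refine ⟨f i₀, w.copy rfl hi₀.symm, ?_, ?_, ?_⟩
  · have hlen : w.length = m₀ := by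
      have := congrArg List.length hw
      simpa [SimpleGraph.Walk.length_darts] using this
    rw [SimpleGraph.Walk.length_copy, hlen]
    exact hm₀pos
  · rw [SimpleGraph.Walk.darts_copy, hw]
    refine List.Nodup.map_on ?_ List.nodup_range
    intro c hc c' hc' hcc'
    rw [List.mem_range] at hc hc'
    have hfe : f (i₀ + c) = f (i₀ + c') := congrArg Prod.fst hcc'
    by_contra hne
    rcases Nat.lt_or_ge c c' with h' | h'
    · exact hdist c c' h' (by omega) hfe
    · have h'' : c' < c := by omega
      exact hdist c' c h'' (by omega) hfe.symm
  · rw [SimpleGraph.Walk.darts_copy, hw]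
    intro e he
    obtain ⟨c, _, rfl⟩ := List.mem_map.mp he
    exact hfpair (i₀ + c)


/-! ### memB1R closure -/

lemma memB1R_zero (G : SimpleGraph V) (R : ℕ) : memB1R G R (0 : C1 V) :=
  ⟨0, memC2R_zero G R, map_zero _⟩

lemma memB1R_add {G : SimpleGraph V} {R : ℕ} {b₁ b₂ : C1 V} (h₁ : memB1R G R b₁)
    (h₂ : memB1R G R b₂) : memB1R G R (b₁ + b₂) := by
  obtain ⟨a₁, m₁, e₁⟩ := h₁
  obtain ⟨a₂, m₂, e₂⟩ := h₂
  exact ⟨a₁ + a₂, memC2R_add m₁ m₂, by rw [map_add, e₁, e₂]⟩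

lemma memB1R_smul {G : SimpleGraph V} {R : ℕ} (r : ℝ) {b : C1 V} (h : memB1R G R b) :
    memB1R G R (r • b) := by
  obtain ⟨a, m, e⟩ := h
  exact ⟨r • a, memC2R_smul r m, by rw [map_smul, e]⟩

/-! ### θ₀ arithmetic -/

lemma theta_mono {θ₀ : ℕ → ℝ} (hnn : ∀ n, 0 ≤ θ₀ n)
    (hsuper : ∀ r s : ℕ, θ₀ r + θ₀ s ≤ θ₀ (r + s)) {a b : ℕ} (hab : a ≤ b) :
    θ₀ a ≤ θ₀ b := by
  have := hsuper a (b - a)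
  rw [show a + (b - a) = b from by omega] at this
  have := hnn (b - a)
  linarith

lemma theta_mul {θ₀ : ℕ → ℝ} (hnn : ∀ n, 0 ≤ θ₀ n)
    (hsuper : ∀ r s : ℕ, θ₀ r + θ₀ s ≤ θ₀ (r + s)) (k s : ℕ) :
    (k : ℝ) * θ₀ s ≤ θ₀ (k * s) := by
  induction k with
  | zero => simpa using hnn 0
  | succ k ih =>
    have := hsuper (k * s) s
    rw [show k * s + s = (k + 1) * s from by ring] at this
    push_cast
    nlinarith [hnn s]

/-! ### Decomposition of nonnegative cycles -/

lemma decomp_mem {G : SimpleGraph V} {R R₀ : ℕ} (hR₀R : R₀ ≤ R)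
    (hwalks : ∀ (x : V) (w : G.Walk x x), memB1R G R₀ (walkChain G w)) :
    ∀ d : C1 V, (∀ e, 0 ≤ d e) → (∀ e ∈ d.support, G.Adj e.1 e.2) → bdry1 d = 0 →
      memB1R G R d := by
  classical
  suffices H : ∀ n (d : C1 V), d.support.card ≤ n → (∀ e, 0 ≤ d e) →
      (∀ e ∈ d.support, G.Adj e.1 e.2) → bdry1 d = 0 → memB1R G R d by
    intro d; exact H d.support.card d le_rfl
  intro n
  induction n with
  | zero =>
    intro d hcard _ _ _
    have : d = 0 := by
      have := Finset.card_eq_zero.mp (Nat.le_zero.mp hcard)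
      exact Finsupp.support_eq_empty.mp this
    rw [this]; exact memB1R_zero G R
  | succ n ih =>
    intro d hcard hpos hadj hcyc
    by_cases hd0 : d = 0
    · rw [hd0]; exact memB1R_zero G R
    obtain ⟨x, w, hwpos, hnodup, hmem⟩ := exists_cycle hd0 hpos hadj hcyc
    set L := w.darts.map SimpleGraph.Dart.toProd with hL
    have hLlen : L.length = w.length := by
      rw [hL]; simp [SimpleGraph.Walk.length_darts]
    have hLne : L.toFinset.Nonempty := by
      rw [List.toFinset_nonempty_iff]
      intro hnil
      rw [hnil] at hLlen
      simp at hLlen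
      omega
    obtain ⟨e₀, he₀, hmin⟩ := Finset.exists_min_image L.toFinset d hLne
    rw [List.mem_toFinset] at he₀
    set m := d e₀ with hm
    have he₀s : e₀ ∈ d.support := hmem e₀ he₀
    have hmpos : 0 < m := lt_of_le_of_ne (hpos e₀) (Ne.symm (Finsupp.mem_support_iff.mp he₀s))
    have hwc : ∀ e, walkChain G w e = if e ∈ L then (1:ℝ) else 0 := by
      intro e
      rw [walkChain_eq_lsing, ← hL]
      by_cases he : e ∈ L
      · rw [lsing_apply_nodup hnodup, if_pos he, if_pos he]
      · rw [lsing_apply_nodup hnodup, if_neg he, if_neg he]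
    set d' : C1 V := d - m • walkChain G w with hd'
    have hd'app : ∀ e, d' e = d e - m * walkChain G w e := by
      intro e; rw [hd', Finsupp.sub_apply, Finsupp.smul_apply, smul_eq_mul]
    have hd'pos : ∀ e, 0 ≤ d' e := by
      intro e
      rw [hd'app, hwc]
      by_cases he : e ∈ L
      · rw [if_pos he]
        have := hmin e (List.mem_toFinset.mpr he)
        linarith
      · rw [if_neg he]; have := hpos e; linarith
    have hsub : d'.support ⊆ d.support := by
      intro e he
      rw [Finsupp.mem_support_iff] at he ⊢
      intro hde
      refine he ?_
      rw [hd'app, hde, hwc]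
      have : e ∉ L := fun hh => (Finsupp.mem_support_iff.mp (hmem e hh)) hde
      rw [if_neg this]
      ring
    have he₀n : e₀ ∉ d'.support := by
      rw [Finsupp.notMem_support_iff, hd'app, hwc, if_pos he₀, mul_one, hm, sub_self]
    have hlt : d'.support.card < d.support.card :=
      Finset.card_lt_card (Finset.ssubset_iff_of_subset hsub |>.mpr ⟨e₀, he₀s, he₀n⟩)
    have hadj' : ∀ e ∈ d'.support, G.Adj e.1 e.2 := fun e he => hadj e (hsub he)
    have hcyc' : bdry1 d' = 0 := by
      rw [hd', map_sub, map_smul, hcyc, bdry1_walkChain, sub_self, smul_zero, sub_zero]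
    have hB1d' : memB1R G R d' := ih d' (by omega) hd'pos hadj' hcyc'
    have hBw : memB1R G R (m • walkChain G w) :=
      memB1R_smul m (memB1R_mono hR₀R (hwalks x w))
    have : d = d' + m • walkChain G w := by rw [hd']; abel
    rw [this]
    exact memB1R_add hB1d' hBw


/-! ### Quantitative decomposition -/

lemma decomp_fill {G : SimpleGraph V} {R R₀ : ℕ} (hR₀R : R₀ ≤ R) {θ₀ : ℕ → ℝ}
    (hnn : ∀ n, 0 ≤ θ₀ n) (hsuper : ∀ r s : ℕ, θ₀ r + θ₀ s ≤ θ₀ (r + s))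
    (hfhif : FinHomIsop G R₀ θ₀) :
    ∀ N : ℕ, ∀ d : C1 V, (∀ e, 0 ≤ d e) → IntCoeffs d →
      (∀ e ∈ d.support, G.Adj e.1 e.2) → bdry1 d = 0 → l1 d = (N : ℝ) →
      ∀ ε : ℝ, 0 < ε → Fillable G R (θ₀ N + ε) d := by
  classical
  intro N
  induction N using Nat.strong_induction_on with
  | _ N ih =>
  intro d hpos hint hadj hcyc hmass ε hε
  by_cases hd0 : d = 0
  · refine ⟨0, memC2R_zero G R, by rw [map_zero, hd0], ?_⟩
    rw [l1_zero]
    have := hnn N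
    linarith
  obtain ⟨x, w, hwpos, hnodup, hmem⟩ := exists_cycle hd0 hpos hadj hcyc
  set L := w.darts.map SimpleGraph.Dart.toProd with hL
  have hLlen : L.length = w.length := by
    rw [hL]; simp [SimpleGraph.Walk.length_darts]
  have hLne : L.toFinset.Nonempty := by
    rw [List.toFinset_nonempty_iff]
    intro hnil
    rw [hnil] at hLlen
    simp at hLlen
    omega
  obtain ⟨e₀, he₀, hmin⟩ := Finset.exists_min_image L.toFinset d hLne
  rw [List.mem_toFinset] at he₀
  set m := d e₀ with hm
  have he₀s : e₀ ∈ d.support := hmem e₀ he₀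
  have hmpos : 0 < m := lt_of_le_of_ne (hpos e₀) (Ne.symm (Finsupp.mem_support_iff.mp he₀s))
  have hwc : ∀ e, walkChain G w e = if e ∈ L then (1:ℝ) else 0 := by
    intro e
    rw [walkChain_eq_lsing, ← hL]
    by_cases he : e ∈ L
    · rw [lsing_apply_nodup hnodup, if_pos he, if_pos he]
    · rw [lsing_apply_nodup hnodup, if_neg he, if_neg he]
  set d' : C1 V := d - m • walkChain G w with hd'
  have hd'app : ∀ e, d' e = d e - m * walkChain G w e := by
    intro e; rw [hd', Finsupp.sub_apply, Finsupp.smul_apply, smul_eq_mul]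
  have hd'pos : ∀ e, 0 ≤ d' e := by
    intro e
    rw [hd'app, hwc]
    by_cases he : e ∈ L
    · rw [if_pos he]
      have := hmin e (List.mem_toFinset.mpr he)
      linarith
    · rw [if_neg he]; have := hpos e; linarith
  have hsub : d'.support ⊆ d.support := by
    intro e he
    rw [Finsupp.mem_support_iff] at he ⊢
    intro hde
    refine he ?_
    rw [hd'app, hde, hwc]
    have : e ∉ L := fun hh => (Finsupp.mem_support_iff.mp (hmem e hh)) hde
    rw [if_neg this]
    ring
  have hadj' : ∀ e ∈ d'.support, G.Adj e.1 e.2 := fun e he => hadj e (hsub he)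
  have hcyc' : bdry1 d' = 0 := by
    rw [hd', map_sub, map_smul, hcyc, bdry1_walkChain, sub_self, smul_zero, sub_zero]
  -- integrality of the minimum
  obtain ⟨k, hk⟩ := hint e₀
  have hk1 : 1 ≤ k := by
    have h0 : (0:ℝ) < (k:ℝ) := by rw [← hk]; exact hmpos
    have : (0:ℤ) < k := by exact_mod_cast h0
    omega
  set K := k.toNat with hKdef
  have hK1 : 1 ≤ K := by omega
  have hK : (K : ℝ) = m := by
    rw [hm, hk, hKdef]
    norm_cast
    omega
  have hint' : IntCoeffs d' := by
    intro e
    obtain ⟨p, hp⟩ := hint e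
    obtain ⟨q, hq⟩ := intCoeffs_walkChain G w e
    exact ⟨p - k * q, by rw [hd'app, hp, hq, hm, hk]; push_cast; ring⟩
  -- mass bookkeeping
  have hrepr : d = d' + m • walkChain G w := by rw [hd']; abel
  have hmassd : l1 d = l1 d' + m * w.length := by
    rw [hrepr, l1_add_of_nonneg _ _ hd'pos (fun e => by
      rw [Finsupp.smul_apply, smul_eq_mul]
      exact mul_nonneg hmpos.le (walkChain_nonneg G w e)),
      l1_smul_nonneg _ hmpos.le, l1_walkChain]
  have hKlen : K * w.length ≤ N := by
    have h0 : (0:ℝ) ≤ l1 d' := l1_nonneg d'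
    have : ((K * w.length : ℕ) : ℝ) ≤ (N : ℝ) := by
      push_cast
      rw [hK, ← hmass, hmassd]
      linarith
    exact_mod_cast this
  set N' := N - K * w.length with hN'def
  have hN' : l1 d' = (N' : ℝ) := by
    have e1 : ((N - K * w.length : ℕ) : ℝ) = (N : ℝ) - (K : ℝ) * (w.length : ℝ) := by
      rw [Nat.cast_sub hKlen]; push_cast; ring
    rw [hN'def, e1, hK, ← hmass, hmassd]
    ring
  have hKlen1 : 1 ≤ K * w.length :=
    Nat.one_le_iff_ne_zero.mpr (Nat.mul_ne_zero (by omega) (by omega))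
  have hN'lt : N' < N := by omega
  obtain ⟨a', ha'm, ha'b, ha'l⟩ :=
    ih N' hN'lt d' hd'pos hint' hadj' hcyc' hN' (ε/2) (by linarith)
  -- near-optimal filling of the cycle
  obtain ⟨hwB, hwnorm⟩ := hfhif x w
  set S := {r : ℝ | ∃ a : C2 V, memC2R G R₀ a ∧ bdry2 a = walkChain G w ∧ r = l1 a} with hS
  have hfn : fillNorm G R₀ (walkChain G w) = sInf S := rfl
  have hne : S.Nonempty := by
    obtain ⟨a, ham, hab⟩ := hwB
    exact ⟨l1 a, a, ham, hab, rfl⟩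
  have hKpos : (0:ℝ) < (K:ℝ) := by
    have : (1:ℝ) ≤ (K:ℝ) := by exact_mod_cast hK1
    linarith
  have hδ : 0 < ε / (2 * K) := by positivity
  have hlt : sInf S < θ₀ w.length + ε / (2 * K) := by
    rw [← hfn]
    exact lt_of_le_of_lt hwnorm (by linarith)
  obtain ⟨r, hrS, hrlt⟩ := exists_lt_of_csInf_lt hne hlt
  obtain ⟨aw, hawm, hawb, hrw⟩ := hrS
  refine ⟨a' + (K:ℝ) • aw,
    memC2R_add ha'm (memC2R_smul _ (memC2R_mono hR₀R hawm)), ?_, ?_⟩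
  · rw [map_add, map_smul, ha'b, hawb, hK, hrepr]
  · refine le_trans (l1_add_le _ _) ?_
    rw [l1_smul_nonneg _ hKpos.le]
    have h2 : l1 aw ≤ θ₀ w.length + ε / (2 * K) := by rw [← hrw]; linarith
    have h2' : (K:ℝ) * l1 aw ≤ (K:ℝ) * (θ₀ w.length + ε / (2 * K)) :=
      mul_le_mul_of_nonneg_left h2 hKpos.le
    have h3 : (K:ℝ) * (θ₀ w.length + ε / (2 * K)) = (K:ℝ) * θ₀ w.length + ε / 2 := by
      field_simp
    have h4 : (K:ℝ) * θ₀ w.length ≤ θ₀ (K * w.length) := theta_mul hnn hsuper K w.length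
    have h5 : θ₀ N' + θ₀ (K * w.length) ≤ θ₀ N := by
      have := hsuper N' (K * w.length)
      rw [show N' + K * w.length = N from by omega] at this
      exact this
    linarith


/-! ### Support of boundaries, integral masses -/

lemma memC1R_bdry2 {G : SimpleGraph V} {R : ℕ} :
    ∀ {c : C2 V}, memC2R G R c → memC1R G R (bdry2 c) := by
  classical
  intro c
  induction c using Finsupp.induction with
  | zero => intro _ e he; rw [map_zero] at he; simp at he
  | single_add t r f ht hr ih =>
    intro hmem e he
    have hval : (Finsupp.single t r + f) t = r := by
      simp [Finsupp.notMem_support_iff.mp ht]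
    have htm : t ∈ (Finsupp.single t r + f).support := by
      rw [Finsupp.mem_support_iff, hval]; exact hr
    obtain ⟨h1, h2, h3⟩ := hmem t htm
    have hf : memC2R G R f := by
      intro s hs
      refine hmem s ?_
      have hst : t ≠ s := fun h => ht (h ▸ hs)
      rw [Finsupp.mem_support_iff, Finsupp.add_apply, Finsupp.single_apply, if_neg hst, zero_add]
      exact Finsupp.mem_support_iff.mp hs
    rw [map_add] at he
    rcases Finset.mem_union.mp (Finsupp.support_add he) with h | h
    · rw [bdry2_single] at h
      have h' := Finsupp.support_smul h
      rcases Finset.mem_union.mp (Finsupp.support_add h') with h'' | h''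
      · rcases Finset.mem_union.mp (Finsupp.support_sub h'') with h3' | h3'
        · have := Finsupp.support_single_subset h3'
          simp only [Finset.mem_singleton] at this
          subst this
          exact h3
        · have := Finsupp.support_single_subset h3'
          simp only [Finset.mem_singleton] at this
          subst this
          exact h2
      · have := Finsupp.support_single_subset h''
        simp only [Finset.mem_singleton] at this
        subst this
        exact h1
    · exact ih hf e h

lemma exists_nat_l1 {α : Type*} {c : α →₀ ℝ} (hpos : ∀ t, 0 ≤ c t) (hint : IntCoeffs c) :
    ∃ N : ℕ, l1 c = (N : ℝ) := by
  classical
  suffices H : ∀ s : Finset α, ∃ N : ℕ, (∑ t ∈ s, |c t|) = (N : ℝ) from H c.support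
  intro s
  induction s using Finset.induction_on with
  | empty => exact ⟨0, by simp⟩
  | insert a s hnotmem ih =>
    obtain ⟨N, hN⟩ := ih
    obtain ⟨k, hk⟩ := hint a
    have hk0 : 0 ≤ k := by
      have := hpos a
      rw [hk] at this
      exact_mod_cast this
    refine ⟨k.toNat + N, ?_⟩
    rw [Finset.sum_insert hnotmem, hN, hk, abs_of_nonneg (by exact_mod_cast hk0 : (0:ℝ) ≤ (k:ℝ))]
    have hcast : ((k.toNat : ℕ) : ℝ) = (k : ℝ) := by
      exact_mod_cast congrArg (Int.cast : ℤ → ℝ) (Int.toNat_of_nonneg hk0)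
    push_cast
    rw [hcast]

lemma fillNorm_le {G : SimpleGraph V} {R : ℕ} {b : C1 V} {a : C2 V}
    (ham : memC2R G R a) (hab : bdry2 a = b) : fillNorm G R b ≤ l1 a := by
  refine csInf_le ⟨0, ?_⟩ ⟨a, ham, hab, rfl⟩
  rintro r ⟨a', _, _, rfl⟩
  exact l1_nonneg a'

end Aux

/-- upgrading a finite homological isoperimetric function with
super-additive θ₀. For R ≥ R₀: (1) 1-cycles in C₁^R that are boundaries lie
in B₁^R; (2) integral b ∈ B₁^R satisfy ‖b‖_F^R ≤ θ₀(3·R·‖b‖₁) + 5·R·‖b‖₁. -/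
theorem fhif_upgrade (G : SimpleGraph V) (hconn : G.Connected)
    (R₀ : ℕ) (hR₀ : 1 ≤ R₀) (θ₀ : ℕ → ℝ)
    (hnn : ∀ n, 0 ≤ θ₀ n)
    (hsuper : ∀ r s : ℕ, θ₀ r + θ₀ s ≤ θ₀ (r + s))
    (hfhif : FinHomIsop G R₀ θ₀) :
    ∀ R, R₀ ≤ R →
      (∀ b : C1 V, memC1R G R b → (∃ c : C2 V, bdry2 c = b) → memB1R G R b) ∧
      (∀ (b : C1 V) (n : ℕ), IntCoeffs b → l1 b = (n : ℝ) → memB1R G R b →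
        fillNorm G R b ≤ θ₀ (3 * (R * n)) + 5 * ((R : ℝ) * n)) := by
  intro R hRR
  have hR1 : 1 ≤ R := le_trans hR₀ hRR
  constructor
  · rintro b hbC1 ⟨c, hc⟩
    have hcyc : bdry1 b = 0 := by rw [← hc, bdry1_bdry2]
    obtain ⟨d, hdpos, hdadj, hdfill, -, -⟩ := reduce hR1 b hbC1
    obtain ⟨a, ham, hab, -⟩ := hdfill
    have hdeq : d = b - bdry2 a := by rw [hab]; abel
    have hdcyc : bdry1 d = 0 := by
      rw [hdeq, map_sub, hcyc, bdry1_bdry2, sub_zero]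
    have hwalks : ∀ (x : V) (w : G.Walk x x), memB1R G R₀ (walkChain G w) :=
      fun x w => (hfhif x w).1
    have hdB : memB1R G R d := decomp_mem hRR hwalks d hdpos hdadj hdcyc
    have hbe : b = bdry2 a + d := by rw [hab]; abel
    rw [hbe]
    exact memB1R_add ⟨a, ham, rfl⟩ hdB
  · intro b n hbint hbl1 hbB
    obtain ⟨c, hcm, hcb⟩ := hbB
    have hbC1 : memC1R G R b := by rw [← hcb]; exact memC1R_bdry2 hcm
    have hcyc : bdry1 b = 0 := by rw [← hcb, bdry1_bdry2]
    obtain ⟨d, hdpos, hdadj, hdfill, hdl1, hdint⟩ := reduce hR1 b hbC1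
    obtain ⟨a₁, h1m, h1b, h1l⟩ := hdfill
    have hdeq : d = b - bdry2 a₁ := by rw [h1b]; abel
    have hdcyc : bdry1 d = 0 := by rw [hdeq, map_sub, hcyc, bdry1_bdry2, sub_zero]
    obtain ⟨N, hN⟩ := exists_nat_l1 hdpos (hdint hbint)
    have hNle : N ≤ R * n := by
      have h' : (N : ℝ) ≤ ((R * n : ℕ) : ℝ) := by
        have h1 : (N : ℝ) = l1 d := hN.symm
        have h2 : l1 d ≤ (R : ℝ) * l1 b := hdl1
        rw [hbl1] at h2
        push_cast
        linarith
      exact_mod_cast h'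
    have key : ∀ ε : ℝ, 0 < ε → fillNorm G R b ≤ ((R:ℝ) + 3) * (n:ℝ) + θ₀ N + ε := by
      intro ε hε
      obtain ⟨a₂, h2m, h2b, h2l⟩ :=
        decomp_fill hRR hnn hsuper hfhif N d hdpos (hdint hbint) hdadj hdcyc hN ε hε
      have hb2 : bdry2 (a₁ + a₂) = b := by rw [map_add, h1b, h2b]; abel
      refine le_trans (fillNorm_le (memC2R_add h1m h2m) hb2) ?_
      refine le_trans (l1_add_le a₁ a₂) ?_
      rw [hbl1] at h1l
      linarith
    have hfb : fillNorm G R b ≤ ((R:ℝ) + 3) * (n:ℝ) + θ₀ N := by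
      refine le_of_forall_pos_le_add ?_
      intro ε hε
      have := key ε hε
      linarith
    have hθ : θ₀ N ≤ θ₀ (3 * (R * n)) := theta_mono hnn hsuper (by omega)
    have hRn1 : (1:ℝ) ≤ (R:ℝ) := by exact_mod_cast hR1
    have hn0 : (0:ℝ) ≤ (n:ℝ) := Nat.cast_nonneg n
    have h6 : ((R:ℝ) + 3) * (n:ℝ) ≤ 5 * ((R:ℝ) * (n:ℝ)) := by nlinarith
    linarith
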